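/- Let e ≥ 1, let w_1,…,w_e, a_0 be rational numbers, and suppose there exist e+1 distinct integers t_1,…,t_{e+1} such that y_i = a_0 + w_1 t_i + … + w_e t_i^e is an integer with |y_i| ≤ B^e for each i. Then |w_e| ≤ 2(e+1)B^e/e; in particular |w_e|^{1/e} ≤ 2B. -/

import Mathlib

open Polynomial Finset

theorem coeff_basis_aux (e : ℕ) (v : Fin (e+1) → ℚ) (hv : Function.Injective v) (i : Fin (e+1)) :
    (Lagrange.basis Finset.univ v i).coeff e = ∏ j ∈ Finset.univ.erase i, (v i - v j)⁻¹ := by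
  have hd : (Lagrange.basis Finset.univ v i).natDegree = e := by
    rw [Lagrange.natDegree_basis (hv.injOn) (Finset.mem_univ i)]
    simp
  have : (Lagrange.basis Finset.univ v i).coeff e
      = (Lagrange.basis Finset.univ v i).leadingCoeff := by
    rw [Polynomial.leadingCoeff, hd]
  rw [this, Lagrange.basis, Polynomial.leadingCoeff_prod]
  refine Finset.prod_congr rfl fun j hj => ?_
  rw [Lagrange.basisDivisor, leadingCoeff_mul, leadingCoeff_C, leadingCoeff_X_sub_C, mul_one]

theorem coeff_eq_sum_aux (e : ℕ) (p : Polynomial ℚ) (hdeg : p.natDegree ≤ e)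
    (v : Fin (e+1) → ℚ) (hv : Function.Injective v) :
    p.coeff e = ∑ i, p.eval (v i) * ∏ j ∈ Finset.univ.erase i, (v i - v j)⁻¹ := by
  have hcard : (Finset.univ : Finset (Fin (e+1))).card = e + 1 := by simp
  have hlt : p.degree < ((Finset.univ : Finset (Fin (e+1))).card : ℕ) := by
    rw [hcard]
    exact lt_of_le_of_lt (Polynomial.degree_le_natDegree) (by exact_mod_cast Nat.lt_succ_of_le hdeg)
  have hp := Lagrange.eq_interpolate (f := p) hv.injOn hlt
  conv_lhs => rw [hp]
  rw [Lagrange.interpolate_apply, Polynomial.finset_sum_coeff]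
  refine Finset.sum_congr rfl fun i _ => ?_
  rw [Polynomial.coeff_C_mul, coeff_basis_aux e v hv i]

theorem prod_lb_aux (e : ℕ) (he : 1 ≤ e) (t : Fin (e+1) → ℤ) (ht : Function.Injective t)
    (i : Fin (e+1)) :
    1 ≤ ∏ j ∈ Finset.univ.erase i, |t i - t j| ∧
      (e : ℤ) ≤ 2 * ∏ j ∈ Finset.univ.erase i, |t i - t j| := by
  have hone : ∀ j ∈ Finset.univ.erase i, 1 ≤ |t i - t j| := by
    intro j hj
    have hne : t i - t j ≠ 0 := by
      have : j ≠ i := (Finset.mem_erase.mp hj).1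
      exact sub_ne_zero_of_ne (fun h => this (ht h.symm))
    exact Int.one_le_abs hne
  have h1 : (1:ℤ) ≤ ∏ j ∈ Finset.univ.erase i, |t i - t j| := by
    calc (1:ℤ) = ∏ j ∈ Finset.univ.erase i, 1 := by simp
    _ ≤ _ := Finset.prod_le_prod (by intros; norm_num) hone
  refine ⟨h1, ?_⟩
  -- max and min
  obtain ⟨jM, -, hM⟩ := Finset.exists_max_image Finset.univ t ⟨i, Finset.mem_univ i⟩
  obtain ⟨jm, -, hm⟩ := Finset.exists_min_image Finset.univ t ⟨i, Finset.mem_univ i⟩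
  have hspread : (e : ℤ) ≤ t jM - t jm := by
    have himg : (Finset.univ.image t).card = e + 1 := by
      rw [Finset.card_image_of_injective _ ht, Finset.card_univ, Fintype.card_fin]
    have hsub : Finset.univ.image t ⊆ Finset.Icc (t jm) (t jM) := by
      intro x hx
      obtain ⟨j, -, rfl⟩ := Finset.mem_image.mp hx
      exact Finset.mem_Icc.mpr ⟨hm j (Finset.mem_univ j), hM j (Finset.mem_univ j)⟩
    have := Finset.card_le_card hsub
    rw [himg, Int.card_Icc] at this
    omega
  -- one of jM, jm is far from i
  have habsM : t jM - t i ≤ |t i - t jM| := by rw [abs_sub_comm]; exact le_abs_self _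
  have habsm : t i - t jm ≤ |t i - t jm| := le_abs_self _
  have key : ∃ j0, j0 ≠ i ∧ (e : ℤ) ≤ 2 * |t i - t j0| := by
    rcases le_or_gt (e : ℤ) (2 * (t jM - t i)) with h | h
    · refine ⟨jM, ?_, by omega⟩
      intro hji; rw [hji] at h; omega
    · refine ⟨jm, ?_, by omega⟩
      intro hji
      rw [hji] at hspread
      have := hM jm (Finset.mem_univ jm)
      omega
  obtain ⟨j0, hj0ne, hj0⟩ := key
  have hmem : j0 ∈ Finset.univ.erase i := Finset.mem_erase.mpr ⟨hj0ne, Finset.mem_univ j0⟩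
  have hsplit := (Finset.mul_prod_erase _ (fun j => |t i - t j|) hmem).symm
  have hrest : (1:ℤ) ≤ ∏ j ∈ (Finset.univ.erase i).erase j0, |t i - t j| := by
    calc (1:ℤ) = ∏ j ∈ (Finset.univ.erase i).erase j0, 1 := by simp
    _ ≤ _ := Finset.prod_le_prod (by intros; norm_num)
      (fun j hj => hone j (Finset.mem_of_mem_erase hj))
  rw [hsplit]
  nlinarith [abs_nonneg (t i - t j0)]

/-- **Lagrange interpolation bound on the leading coefficient** (from the proof of
Proposition 4.8). If `p = a_0 + w_1 t + … + w_e t^e ∈ ℚ[t]` takes integer values `y_i`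
with `|y_i| ≤ B^e` at `e+1` distinct integers `t_i`, then
`|w_e| ≤ 2(e+1)B^e/e`, and in particular `|w_e|^{1/e} ≤ 2B`. -/
theorem stmt_4 (e : ℕ) (he : 1 ≤ e) (p : Polynomial ℚ) (hdeg : p.natDegree ≤ e)
    (B : ℝ) (hB : 1 ≤ B) (t : Fin (e + 1) → ℤ) (ht : Function.Injective t)
    (y : Fin (e + 1) → ℤ)
    (hy : ∀ i, (y i : ℚ) = p.eval (t i : ℚ) ∧ |((y i : ℤ) : ℝ)| ≤ B ^ e) :
    |((p.coeff e : ℚ) : ℝ)| ≤ 2 * (e + 1) * B ^ e / e ∧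
      |((p.coeff e : ℚ) : ℝ)| ^ ((1 : ℝ) / e) ≤ 2 * B := by
  set v : Fin (e + 1) → ℚ := fun i => (t i : ℚ) with hv_def
  have hv : Function.Injective v := fun a b h => ht (Int.cast_injective (α := ℚ) h)
  have hw := coeff_eq_sum_aux e p hdeg v hv
  set P : Fin (e + 1) → ℤ := fun i => ∏ j ∈ Finset.univ.erase i, |t i - t j| with hP_def
  have hPlb : ∀ i, 1 ≤ P i ∧ (e : ℤ) ≤ 2 * P i := fun i => prod_lb_aux e he t ht i
  -- rational bound on each term
  have hterm : ∀ i, |p.eval (v i) * ∏ j ∈ Finset.univ.erase i, (v i - v j)⁻¹|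
      = |(y i : ℚ)| * ((P i : ℚ))⁻¹ := by
    intro i
    rw [← (hy i).1, abs_mul, Finset.abs_prod]
    congr 1
    calc ∏ j ∈ Finset.univ.erase i, |(v i - v j)⁻¹|
        = (∏ j ∈ Finset.univ.erase i, |v i - v j|)⁻¹ := by
          rw [← Finset.prod_inv_distrib]
          exact Finset.prod_congr rfl fun j _ => abs_inv _
      _ = ((P i : ℚ))⁻¹ := by
          congr 1
          push_cast [hP_def]
          rfl
  have hq : |p.coeff e| ≤ ∑ i, |(y i : ℚ)| * ((P i : ℚ))⁻¹ := by
    rw [hw]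
    refine le_trans (Finset.abs_sum_le_sum_abs _ _) ?_
    exact le_of_eq (Finset.sum_congr rfl fun i _ => hterm i)
  -- move to ℝ
  have hr : |((p.coeff e : ℚ) : ℝ)| ≤ ∑ i, |((y i : ℤ) : ℝ)| * ((P i : ℝ))⁻¹ := by
    have := hq
    rw [← Rat.cast_le (K := ℝ)] at this
    push_cast at this ⊢
    convert this using 2
  have hPpos : ∀ i, (0 : ℝ) < (P i : ℝ) := fun i => by exact_mod_cast (hPlb i).1.trans_lt' (by norm_num)
  have hBe : (0 : ℝ) ≤ B ^ e := by positivity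
  have hepos : (0 : ℝ) < e := by exact_mod_cast he.trans_lt' (by norm_num) |>.trans_le le_rfl
  -- two bounds
  have hbound1 : |((p.coeff e : ℚ) : ℝ)| ≤ (e + 1) * (B ^ e * (2 / e)) := by
    refine hr.trans ?_
    calc ∑ i, |((y i : ℤ) : ℝ)| * ((P i : ℝ))⁻¹
        ≤ ∑ _i : Fin (e+1), B ^ e * (2 / e) := by
          refine Finset.sum_le_sum fun i _ => ?_
          refine mul_le_mul (hy i).2 ?_ (by positivity) hBe
          have h2P : (e : ℝ) ≤ 2 * (P i : ℝ) := by exact_mod_cast (hPlb i).2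
          rw [le_div_iff₀ hepos]
          calc ((P i : ℝ))⁻¹ * e ≤ ((P i : ℝ))⁻¹ * (2 * (P i : ℝ)) :=
                mul_le_mul_of_nonneg_left h2P (inv_nonneg.mpr (hPpos i).le)
            _ = 2 := by field_simp [(hPpos i).ne']
      _ = (e + 1) * (B ^ e * (2 / e)) := by
          rw [Finset.sum_const, Finset.card_univ, Fintype.card_fin, nsmul_eq_mul]
          push_cast; ring
  have hbound2 : |((p.coeff e : ℚ) : ℝ)| ≤ (e + 1) * B ^ e := by
    refine hr.trans ?_
    calc ∑ i, |((y i : ℤ) : ℝ)| * ((P i : ℝ))⁻¹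
        ≤ ∑ _i : Fin (e+1), B ^ e * 1 := by
          refine Finset.sum_le_sum fun i _ => ?_
          refine mul_le_mul (hy i).2 ?_ (by positivity) hBe
          exact inv_le_one_of_one_le₀ (by exact_mod_cast (hPlb i).1)
      _ = (e + 1) * B ^ e := by
          rw [Finset.sum_const, Finset.card_univ, Fintype.card_fin, nsmul_eq_mul]
          push_cast; ring
  constructor
  · refine hbound1.trans (le_of_eq ?_)
    field_simp
  · have hkey : |((p.coeff e : ℚ) : ℝ)| ≤ (2 * B) ^ e := by
      rcases eq_or_lt_of_le he with h1 | h2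
      · subst h1
        norm_num at hbound2 ⊢
        linarith
      · have he1 : (1:ℝ) ≤ (e:ℝ) := by exact_mod_cast he
        have hc : ((e:ℝ) + 1) * (2 / e) ≤ 4 := by
          rw [mul_div_assoc', div_le_iff₀ hepos]
          linarith
        have h4 : ((e:ℝ) + 1) * (B ^ e * (2 / e)) ≤ 4 * B ^ e := by
          calc ((e:ℝ) + 1) * (B ^ e * (2 / e)) = B ^ e * (((e:ℝ) + 1) * (2 / e)) := by ring
            _ ≤ B ^ e * 4 := mul_le_mul_of_nonneg_left hc hBe
            _ = 4 * B ^ e := by ring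
        have h2e : (4:ℝ) ≤ 2 ^ e := by
          calc (4:ℝ) = 2 ^ 2 := by norm_num
            _ ≤ 2 ^ e := pow_le_pow_right₀ (by norm_num) h2
        calc |((p.coeff e : ℚ) : ℝ)| ≤ ((e:ℝ) + 1) * (B ^ e * (2 / e)) := hbound1
          _ ≤ 4 * B ^ e := h4
          _ ≤ 2 ^ e * B ^ e := mul_le_mul_of_nonneg_right h2e hBe
          _ = (2 * B) ^ e := (mul_pow _ _ _).symm
    have h2B : (0:ℝ) < 2 * B := by linarith
    have hmon := Real.rpow_le_rpow (abs_nonneg _) hkey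
      (by positivity : (0:ℝ) ≤ 1 / (e:ℝ))
    rwa [← Real.rpow_natCast (2 * B) e, ← Real.rpow_mul h2B.le, mul_one_div,
      div_self hepos.ne', Real.rpow_one] at hmon
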